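/- Fix a finitely splitting tree T_max ⊆ ω^{<ω} and a monotone norm μ assigning a non-negative real to each set of immediate successors of each node, with singletons of norm < 1, such that along every branch b of T_max, limsup_n μ(SUCC(b↾n)) = ∞. Define Q to be the set of subtrees T of T_max such that along every branch b of T, limsup_n μ(SUCC_T(b↾n)) = ∞. Then a subtree T of T_max belongs to Q if and only if for every n ∈ ℕ, T is n-dense, i.e., there is a front F of T with μ(SUCC_T(t)) > n for every t ∈ F. -/
import Mathlib


namespace Sacch

/-- The length-`n` initial segment of an infinite sequence, as a list. -/
def restr (b : ℕ → ℕ) (n : ℕ) : List ℕ := List.ofFn fun i : Fin n => b i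

/-- A tree on ω: a set of finite sequences closed under initial segments. -/
def IsTree (T : Set (List ℕ)) : Prop :=
  ∀ s t : List ℕ, s <+: t → t ∈ T → s ∈ T

/-- The set of immediate successors of `t` in `T`. -/
def succs (T : Set (List ℕ)) (t : List ℕ) : Set (List ℕ) :=
  {s | s ∈ T ∧ ∃ k : ℕ, s = t ++ [k]}

/-- `T` is finitely splitting: every node has finitely many immediate successors. -/
def FinSplit (T : Set (List ℕ)) : Prop :=
  ∀ t ∈ T, (succs T t).Finite

/-- `b` is a chain in `T`: a pairwise `≼`-comparable subset of `T`. -/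
def IsChainIn (T b : Set (List ℕ)) : Prop :=
  b ⊆ T ∧ ∀ s ∈ b, ∀ t ∈ b, s <+: t ∨ t <+: s

/-- `b` is a branch of `T`: a maximal chain. -/
def IsBranch (T b : Set (List ℕ)) : Prop :=
  IsChainIn T b ∧ ∀ b', IsChainIn T b' → b ⊆ b' → b' = b

/-- `A` is an antichain: pairwise `≼`-incomparable. -/
def IsAntichainIn (A : Set (List ℕ)) : Prop :=
  ∀ s ∈ A, ∀ t ∈ A, s ≠ t → ¬(s <+: t ∨ t <+: s)

/-- `F` is a front of `T`: an antichain in `T` meeting every branch of `T`. -/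
def IsFront (T F : Set (List ℕ)) : Prop :=
  F ⊆ T ∧ IsAntichainIn F ∧ ∀ b, IsBranch T b → ∃ t ∈ b, t ∈ F

/-- The norm `μ_T(t)` of a node `t` in a subtree `T`: the `μ`-value of its
set of immediate `T`-successors. -/
noncomputable def normOf (μ : List ℕ → Set (List ℕ) → ℝ)
    (T : Set (List ℕ)) (t : List ℕ) : ℝ := μ t (succs T t)

/-- Along the branch `b` of `T`, `limsup μ_T(b ↾ n) = ∞`. -/
def BranchLimsupInf (μ : List ℕ → Set (List ℕ) → ℝ)
    (T b : Set (List ℕ)) : Prop :=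
  ∀ m : ℝ, ∀ N : ℕ, ∃ t ∈ b, N ≤ t.length ∧ m < normOf μ T t

/-- The standing assumptions on `(Tmax, μ)` making a finitely splitting
lim-sup tree forcing: `Tmax` is a nonempty finitely splitting tree, `μ`
assigns non-negative reals monotonically to sets of successors, singletons
have norm `< 1` and along every branch of `Tmax` the limsup of the norms
is infinite. -/
structure LimSupForcing (Tmax : Set (List ℕ))
    (μ : List ℕ → Set (List ℕ) → ℝ) : Prop where
  tree : IsTree Tmax
  nonempty : Tmax.Nonempty
  finSplit : FinSplit Tmax
  mono : ∀ t : List ℕ, ∀ A B : Set (List ℕ), A ⊆ B → μ t A ≤ μ t B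
  nonneg : ∀ t A, 0 ≤ μ t A
  singleton_lt_one : ∀ t s : List ℕ, μ t {s} < 1
  limsup : ∀ b, IsBranch Tmax b → BranchLimsupInf μ Tmax b

/-- `T ∈ Q`: `T` is a condition of the lim-sup tree forcing `Q = Q(Tmax, μ)`,
i.e. a nonempty subtree of `Tmax` along each of whose branches the limsup of
the norms is infinite. -/
def memQ (Tmax : Set (List ℕ)) (μ : List ℕ → Set (List ℕ) → ℝ)
    (T : Set (List ℕ)) : Prop :=
  T.Nonempty ∧ T ⊆ Tmax ∧ IsTree T ∧
    ∀ b, IsBranch T b → BranchLimsupInf μ T b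

/-- `T` is `n`-dense: there is a front of `T` all of whose nodes have
norm `> n`. -/
def nDense (μ : List ℕ → Set (List ℕ) → ℝ) (T : Set (List ℕ)) (n : ℕ) : Prop :=
  ∃ F, IsFront T F ∧ ∀ t ∈ F, (n : ℝ) < normOf μ T t

end Sacch

open Sacch in
private lemma Sacch.branch_downward {T b : Set (List ℕ)} (hT : IsTree T)
    (hb : IsBranch T b) {t : List ℕ} (ht : t ∈ b) {s : List ℕ} (hs : s <+: t) :
    s ∈ b := by
  have hsT : s ∈ T := hT s t hs (hb.1.1 ht)
  have hchain : IsChainIn T (insert s b) := by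
    constructor
    · intro u hu
      rcases hu with rfl | hu
      · exact hsT
      · exact hb.1.1 hu
    · have comp : ∀ w ∈ b, s <+: w ∨ w <+: s := by
        intro w hw
        rcases hb.1.2 w hw t ht with h1 | h1
        · exact (List.prefix_or_prefix_of_prefix hs h1)
        · exact Or.inl (hs.trans h1)
      intro u hu v hv
      rcases hu with rfl | hu <;> rcases hv with rfl | hv
      · exact Or.inl (List.prefix_refl _)
      · exact comp v hv
      · exact (comp u hu).symm
      · exact hb.1.2 u hu v hv
  have heq := hb.2 _ hchain (Set.subset_insert s b)
  rw [← heq]; exact Set.mem_insert _ _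


open Sacch in
/-- A subtree `T` of `Tmax` belongs to the lim-sup tree forcing `Q` iff it is
`n`-dense for every `n`: there is a front of `T` all of whose nodes have
`μ_T`-norm `> n`. -/
theorem memQ_iff_nDense (Tmax : Set (List ℕ)) (μ : List ℕ → Set (List ℕ) → ℝ)
    (h : LimSupForcing Tmax μ) (T : Set (List ℕ)) :
    memQ Tmax μ T ↔
      (T.Nonempty ∧ T ⊆ Tmax ∧ IsTree T ∧ ∀ n : ℕ, nDense μ T n) := by
  classical
  constructor
  · rintro ⟨hne, hsub, htree, hlim⟩
    refine ⟨hne, hsub, htree, fun n => ?_⟩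
    refine ⟨{t | t ∈ T ∧ (n : ℝ) < normOf μ T t ∧
        ∀ s, s <+: t → s ≠ t → ¬((n : ℝ) < normOf μ T s)}, ⟨?_, ?_, ?_⟩, ?_⟩
    · exact fun t ht => ht.1
    · rintro s hs t ht hne' (hst | hts)
      · exact ht.2.2 s hst hne' hs.2.1
      · exact hs.2.2 t hts (Ne.symm hne') ht.2.1
    · intro b hbb
      obtain ⟨t, htb, -, hnorm⟩ := hlim b hbb n 0
      have hP : ∃ k, ∃ s : List ℕ, s <+: t ∧ s.length = k ∧ (n : ℝ) < normOf μ T s :=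
        ⟨t.length, t, List.prefix_refl t, rfl, hnorm⟩
      obtain ⟨s, hst, hslen, hsn⟩ := Nat.find_spec hP
      have hsb : s ∈ b := Sacch.branch_downward htree hbb htb hst
      refine ⟨s, hsb, hbb.1.1 hsb, hsn, ?_⟩
      intro r hrs hrne hrn
      have hrlt : r.length < s.length :=
        lt_of_le_of_ne hrs.length_le (fun he => hrne (hrs.eq_of_length he))
      exact Nat.find_min hP (hslen ▸ hrlt) ⟨r, hrs.trans hst, rfl, hrn⟩
    · exact fun t ht => ht.2.1
  · rintro ⟨hne, hsub, htree, hdense⟩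
    refine ⟨hne, hsub, htree, ?_⟩
    intro b hbb m N
    set S : Set (List ℕ) := {s ∈ b | s.length < N} with hS
    have hinj : Set.InjOn List.length S := by
      intro u hu v hv huv
      rcases hbb.1.2 u hu.1 v hv.1 with h1 | h1
      · exact h1.eq_of_length huv
      · exact (h1.eq_of_length huv.symm).symm
    have hSfin : S.Finite := by
      refine Set.Finite.of_finite_image ((Set.finite_Iio N).subset ?_) hinj
      rintro k ⟨s, hs, rfl⟩
      exact hs.2
    obtain ⟨M, hM⟩ := (hSfin.image (normOf μ T)).bddAbove
    obtain ⟨n, hn⟩ := exists_nat_gt (max m M)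
    obtain ⟨F, hF, hFnorm⟩ := hdense n
    obtain ⟨t, htb, htF⟩ := hF.2.2 b hbb
    have htn : (n : ℝ) < normOf μ T t := hFnorm t htF
    have hmn : m < normOf μ T t :=
      lt_trans (lt_of_le_of_lt (le_max_left m M) hn) htn
    refine ⟨t, htb, ?_, hmn⟩
    by_contra hlen
    have htS : t ∈ S := ⟨htb, Nat.lt_of_not_le hlen⟩
    have : normOf μ T t ≤ M := hM (Set.mem_image_of_mem _ htS)
    exact absurd (lt_trans (lt_of_le_of_lt (le_max_right m M) hn) htn) (not_lt.mpr this)
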